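/- Let λ > 0 and p ∈ ℝ. If h : ℕ_* → ℝ satisfies h(x) = O(x^p) as x → ∞, then f̃_h(x) = O(x^{p−1}), where f̃_h(x) = ((x−1)!/λ^x)·Σ_{i=x}^∞ (λ^i/i!)·h(i). -/

import Mathlib

open Filter

/-- `f̃_h(x) = ((x−1)!/λ^x)·Σ_{i=x}^∞ (λ^i/i!)·h(i)` (shifted index `i = x + j`). -/
noncomputable def ftilde (lam : ℝ) (h : ℕ → ℝ) (x : ℕ) : ℝ :=
  ((x - 1).factorial : ℝ) / lam ^ x * ∑' j : ℕ, lam ^ (x + j) * h (x + j) / ((x + j).factorial : ℝ)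

lemma fact_aux (x : ℕ) (hx : 1 ≤ x) (j : ℕ) :
    (x - 1).factorial * x * j.factorial ≤ (x + j).factorial := by
  induction j with
  | zero =>
    simp only [Nat.factorial_zero, mul_one, Nat.add_zero]
    rw [mul_comm]
    exact (Nat.mul_factorial_pred (by omega)).le
  | succ j ih =>
    rw [Nat.factorial_succ, show x + (j+1) = (x+j) + 1 from rfl, Nat.factorial_succ]
    calc (x-1).factorial * x * ((j+1) * j.factorial)
        = (j+1) * ((x-1).factorial * x * j.factorial) := by ring
      _ ≤ (j+1) * (x+j).factorial := Nat.mul_le_mul_left _ ih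
      _ ≤ (x+j+1) * (x+j).factorial := Nat.mul_le_mul_right _ (by omega)

/-- If `h(x) = O(x^p)` then `f̃_h(x) = O(x^{p−1})`. -/
theorem ftilde_isBigO (lam : ℝ) (hlam : 0 < lam) (p : ℝ) (h : ℕ → ℝ)
    (hh : (fun x : ℕ => h x) =O[atTop] fun x : ℕ => (x : ℝ) ^ p) :
    (fun x : ℕ => ftilde lam h x) =O[atTop] fun x : ℕ => (x : ℝ) ^ (p - 1) := by
  obtain ⟨C, hC, hCb⟩ := hh.exists_pos
  rw [Asymptotics.isBigOWith_iff, eventually_atTop] at hCb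
  obtain ⟨N, hN⟩ := hCb
  obtain ⟨m, hm⟩ := exists_nat_ge p
  set μ : ℝ := 2 ^ m * lam with hμ
  set K : ℝ := ∑' j : ℕ, μ ^ j / (j.factorial : ℝ) with hK
  have hKsum : Summable (fun j : ℕ => μ ^ j / (j.factorial : ℝ)) :=
    Real.summable_pow_div_factorial μ
  apply Asymptotics.IsBigO.of_bound (C * K)
  filter_upwards [eventually_ge_atTop (max N 1)] with x hx
  have hx1 : 1 ≤ x := le_trans (le_max_right _ _) hx
  have hxN : N ≤ x := le_trans (le_max_left _ _) hx
  have hX0 : (0:ℝ) < (x:ℝ) := by exact_mod_cast hx1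
  have hfac0 : (0:ℝ) < ((x-1).factorial : ℝ) := by exact_mod_cast (x-1).factorial_pos
  have hlamx : (0:ℝ) < lam ^ x := pow_pos hlam x
  set D : ℝ := lam ^ x / ((x-1).factorial : ℝ) * (C * (x:ℝ) ^ (p-1)) with hD
  have key : ∀ j : ℕ, ‖lam ^ (x + j) * h (x + j) / (((x + j).factorial : ℕ) : ℝ)‖
      ≤ D * (μ ^ j / (j.factorial : ℝ)) := by
    intro j
    have hF0 : (0:ℝ) < (((x+j).factorial : ℕ) : ℝ) := by exact_mod_cast (x+j).factorial_pos
    have hj0 : (0:ℝ) < (j.factorial : ℝ) := by exact_mod_cast j.factorial_pos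
    have hnorm : ‖lam ^ (x + j) * h (x + j) / (((x + j).factorial : ℕ) : ℝ)‖
        = lam ^ (x+j) * ‖h (x+j)‖ / (((x+j).factorial : ℕ) : ℝ) := by
      rw [norm_div, norm_mul, norm_pow, Real.norm_of_nonneg hlam.le,
        Real.norm_of_nonneg hF0.le]
    rw [hnorm]
    have hhb : ‖h (x+j)‖ ≤ C * ((x:ℝ) + (j:ℝ)) ^ p := by
      have := hN (x+j) (le_trans hxN (Nat.le_add_right _ _))
      rwa [Real.norm_of_nonneg (Real.rpow_nonneg (by positivity) p), Nat.cast_add] at this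
    -- bound on (X+J)^p
    have hXJp : ((x:ℝ) + (j:ℝ)) ^ p ≤ (x:ℝ) ^ (p-1) * (x:ℝ) * ((2:ℝ) ^ m) ^ j := by
      have ht1 : (1:ℝ) ≤ ((x:ℝ) + (j:ℝ)) / (x:ℝ) := by
        rw [le_div_iff₀ hX0]; nlinarith [Nat.cast_nonneg (α := ℝ) j]
      have step1 : ((x:ℝ) + (j:ℝ)) ^ p = (x:ℝ) ^ p * (((x:ℝ)+(j:ℝ))/(x:ℝ)) ^ p := by
        rw [← Real.mul_rpow hX0.le (by linarith)]
        congr 1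
        field_simp
      have step2 : (((x:ℝ)+(j:ℝ))/(x:ℝ)) ^ p ≤ (((x:ℝ)+(j:ℝ))/(x:ℝ)) ^ (m:ℝ) :=
        Real.rpow_le_rpow_of_exponent_le ht1 hm
      have step3 : (((x:ℝ)+(j:ℝ))/(x:ℝ)) ^ (m:ℝ) = (((x:ℝ)+(j:ℝ))/(x:ℝ)) ^ m :=
        Real.rpow_natCast _ m
      have hbase : ((x:ℝ)+(j:ℝ))/(x:ℝ) ≤ 1 + (j:ℝ) := by
        have hX1 : (1:ℝ) ≤ (x:ℝ) := by exact_mod_cast hx1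
        rw [div_le_iff₀ hX0]
        nlinarith [mul_nonneg (Nat.cast_nonneg (α := ℝ) j) (sub_nonneg.mpr hX1)]
      have h2j : (1:ℝ) + (j:ℝ) ≤ (2:ℝ) ^ j := by
        have : 1 + j ≤ 2 ^ j := Nat.one_add_le_iff.mpr (Nat.lt_two_pow_self)
        exact_mod_cast this
      have step4 : (((x:ℝ)+(j:ℝ))/(x:ℝ)) ^ m ≤ ((2:ℝ) ^ j) ^ m := by
        apply pow_le_pow_left₀ (by linarith) (le_trans hbase h2j)
      have step5 : ((2:ℝ) ^ j) ^ m = ((2:ℝ) ^ m) ^ j := by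
        rw [← pow_mul, ← pow_mul, mul_comm]
      have hXp : (x:ℝ) ^ p = (x:ℝ) ^ (p-1) * (x:ℝ) := by
        rw [← Real.rpow_add_one hX0.ne' (p-1)]
        congr 1
        ring
      calc ((x:ℝ) + (j:ℝ)) ^ p = (x:ℝ) ^ p * (((x:ℝ)+(j:ℝ))/(x:ℝ)) ^ p := step1
        _ ≤ (x:ℝ) ^ p * ((2:ℝ) ^ m) ^ j := by
            have h1 : (((x:ℝ)+(j:ℝ))/(x:ℝ)) ^ p ≤ ((2:ℝ) ^ m) ^ j := by
              calc (((x:ℝ)+(j:ℝ))/(x:ℝ)) ^ p ≤ (((x:ℝ)+(j:ℝ))/(x:ℝ)) ^ (m:ℝ) := step2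
                _ = (((x:ℝ)+(j:ℝ))/(x:ℝ)) ^ m := step3
                _ ≤ ((2:ℝ) ^ j) ^ m := step4
                _ = ((2:ℝ) ^ m) ^ j := step5
            exact mul_le_mul_of_nonneg_left h1 (Real.rpow_nonneg hX0.le p)
        _ = (x:ℝ) ^ (p-1) * (x:ℝ) * ((2:ℝ) ^ m) ^ j := by rw [hXp]
    have hfac : (((x-1).factorial : ℝ) * (x:ℝ) * (j.factorial : ℝ)) ≤ (((x+j).factorial : ℕ) : ℝ) := by
      exact_mod_cast fact_aux x hx1 j
    calc lam ^ (x+j) * ‖h (x+j)‖ / (((x+j).factorial : ℕ) : ℝ)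
        ≤ lam ^ (x+j) * (C * ((x:ℝ) + (j:ℝ)) ^ p) / (((x+j).factorial : ℕ) : ℝ) := by
          gcongr
      _ ≤ lam ^ (x+j) * (C * ((x:ℝ) ^ (p-1) * (x:ℝ) * ((2:ℝ) ^ m) ^ j))
            / (((x-1).factorial : ℝ) * (x:ℝ) * (j.factorial : ℝ)) := by
          gcongr
      _ = D * (μ ^ j / (j.factorial : ℝ)) := by
          rw [hD, hμ, pow_add, mul_pow]
          field_simp
  have hD0 : 0 ≤ D := by positivity
  have hsum2 : Summable (fun j : ℕ => D * (μ ^ j / (j.factorial : ℝ))) := hKsum.mul_left D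
  have hsum1 : Summable (fun j : ℕ => ‖lam ^ (x + j) * h (x + j) / (((x + j).factorial : ℕ) : ℝ)‖) :=
    Summable.of_nonneg_of_le (fun j => norm_nonneg _) key hsum2
  have htsum : ∑' j : ℕ, ‖lam ^ (x + j) * h (x + j) / (((x + j).factorial : ℕ) : ℝ)‖ ≤ D * K := by
    calc ∑' j : ℕ, ‖lam ^ (x + j) * h (x + j) / (((x + j).factorial : ℕ) : ℝ)‖
        ≤ ∑' j : ℕ, D * (μ ^ j / (j.factorial : ℝ)) := Summable.tsum_le_tsum key hsum1 hsum2
      _ = D * K := by rw [tsum_mul_left]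
  have hnormf : ‖ftilde lam h x‖ ≤ ((x-1).factorial : ℝ) / lam ^ x * (D * K) := by
    rw [ftilde, norm_mul]
    have h1 : ‖((x-1).factorial : ℝ) / lam ^ x‖ = ((x-1).factorial : ℝ) / lam ^ x := by
      rw [Real.norm_of_nonneg (by positivity)]
    rw [h1]
    exact mul_le_mul_of_nonneg_left ((norm_tsum_le_tsum_norm hsum1).trans htsum) (by positivity)
  have hfinal : ((x-1).factorial : ℝ) / lam ^ x * (D * K) = C * K * (x:ℝ) ^ (p-1) := by
    rw [hD]; field_simp
  rw [hfinal] at hnormf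
  calc ‖ftilde lam h x‖ ≤ C * K * (x:ℝ) ^ (p-1) := hnormf
    _ = C * K * ‖(x:ℝ) ^ (p-1)‖ := by
        rw [Real.norm_of_nonneg (Real.rpow_nonneg hX0.le _)]
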